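/- Fix λ < 1 with λ ≠ 0 and q = 1 − λ > 0. Let p₀,…,p_d be probability densities w.r.t. ν with 0 < ∫ p_i^q dν < ∞, and let p̃_i = p_i^q / ∫ p_i^q dν. For η in the positive orthant define Z(η) = ∫ (Σ_{i=0}^d η_i p̃_i)^{1/q} dν and ψ(η) = (q/(1−q))·log Z(η); for η in the open unit simplex let p_η = Z(η)^{−1}(Σ_i η_i p̃_i)^{1/q} be the λ-mixture density. Assume Z(η) < ∞ and that Z can be differentiated under the integral sign for η in the open unit simplex. Then: (a) for all η, η' in the open unit simplex, 1 + λ ∇ψ(η')·(η − η') = (Z(η)^q / Z(η')^q)·∫ p_η^q p_{η'}^{1−q} dν > 0 and ψ(η) − ψ(η') − (1/λ)·log(1 + λ ∇ψ(η')·(η − η')) = (1/(q−1))·log ∫ p_η^q p_{η'}^{1−q} dν ≥ 0, i.e. the λ-logarithmic divergence of ψ is the Rényi divergence H_q(p_η ‖ p_{η'}); and (b) the function (1/λ)(e^{λψ} − 1) is convex on the open unit simplex. -/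

import Mathlib

open MeasureTheory Real
open scoped RealInnerProductSpace ENNReal BigOperators

noncomputable section

private lemma aux_mul_rpow {a b K r : ℝ} (ha : 0 ≤ a) (hb : 0 ≤ b) (hK : a ≤ K * b)
    (hr : r + 1 ≠ 0) : a * b ^ r ≤ K * b ^ (r + 1) := by
  rcases hb.eq_or_lt with h | h
  · have ha0 : a = 0 := le_antisymm (by simpa [← h] using hK) ha
    simp [ha0, ← h, Real.zero_rpow hr]
  · have : K * b ^ (r + 1) = (K * b) * b ^ r := by
      rw [Real.rpow_add_one h.ne']; ring
    rw [this]
    exact mul_le_mul_of_nonneg_right hK (Real.rpow_nonneg hb _)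

private lemma aux_mul_rpow_ge {a b K r : ℝ} (hb : 0 ≤ b) (hK : K * b ≤ a)
    (hr : r ≠ 0) (hr1 : r + 1 ≠ 0) : K * b ^ (r + 1) ≤ a * b ^ r := by
  rcases hb.eq_or_lt with h | h
  · simp [← h, Real.zero_rpow hr, Real.zero_rpow hr1]
  · have : K * b ^ (r + 1) = (K * b) * b ^ r := by
      rw [Real.rpow_add_one h.ne']; ring
    rw [this]
    exact mul_le_mul_of_nonneg_right hK (Real.rpow_nonneg hb _)

private lemma aux_bernoulli {a b q : ℝ} (ha : 0 ≤ a) (hb : 0 ≤ b) (hq : 1 ≤ q)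
    (h0 : b = 0 → a = 0) : q * a + (1 - q) * b ≤ a ^ q * b ^ (1 - q) := by
  rcases hb.eq_or_lt with h | h
  · have ha0 : a = 0 := h0 h.symm
    have hq0 : q ≠ 0 := by positivity
    simp [ha0, ← h, Real.zero_rpow hq0]
  · have hber := one_add_mul_self_le_rpow_one_add
      (s := a / b - 1) (by have := div_nonneg ha hb; linarith) hq
    have h1 : (1 : ℝ) + (a / b - 1) = a / b := by ring
    rw [h1] at hber
    have h2 : b * (1 + q * (a / b - 1)) ≤ b * (a / b) ^ q :=
      mul_le_mul_of_nonneg_left hber h.le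
    have h3 : b * (1 + q * (a / b - 1)) = q * a + (1 - q) * b := by
      field_simp; ring
    have h4 : b * (a / b) ^ q = a ^ q * b ^ (1 - q) := by
      rw [Real.div_rpow ha hb, Real.rpow_sub h, Real.rpow_one]
      field_simp
    rw [h3, h4] at h2
    exact h2

set_option maxHeartbeats 1000000 in
theorem lambdaMixture_Renyi {d : ℕ} {X : Type*} [MeasurableSpace X] (ν : Measure X)
    (lam q : ℝ) (hlam0 : lam ≠ 0) (hlam1 : lam < 1) (hq : q = 1 - lam)
    (p : Fin (d + 1) → X → ℝ) (hpnn : ∀ i x, 0 ≤ p i x)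
    (hprob : ∀ i, ∫ x, p i x ∂ν = 1)
    (hpq : ∀ i, Integrable (fun x => p i x ^ q) ν)
    (hpqpos : ∀ i, 0 < ∫ x, p i x ^ q ∂ν)
    (pt : Fin (d + 1) → X → ℝ)
    (hpt : ∀ i x, pt i x = p i x ^ q / ∫ z, p i z ^ q ∂ν)
    (S : Set (EuclideanSpace ℝ (Fin (d + 1))))
    (hS : S = {η | (∀ i, 0 < η i) ∧ ∑ i, η i = 1})
    (Z : EuclideanSpace ℝ (Fin (d + 1)) → ℝ)
    (hZ : ∀ η, Z η = ∫ x, (∑ i, η i * pt i x) ^ (1 / q) ∂ν)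
    (hZint : ∀ η ∈ S, Integrable (fun x => (∑ i, η i * pt i x) ^ (1 / q)) ν)
    (ψ : EuclideanSpace ℝ (Fin (d + 1)) → ℝ)
    (hψ : ∀ η : EuclideanSpace ℝ (Fin (d + 1)), (∀ i, 0 < η i) →
      ψ η = (q / (1 - q)) * Real.log (Z η))
    (hdiff : ∀ η ∈ S, DifferentiableAt ℝ ψ η)
    (hDUI : ∀ η ∈ S, ∀ i, gradient ψ η i
      = (1 / (1 - q)) * (∫ x, (∑ j, η j * pt j x) ^ (1 / q - 1) * pt i x ∂ν) / Z η)
    (pη : EuclideanSpace ℝ (Fin (d + 1)) → X → ℝ)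
    (hpη : ∀ η x, pη η x = (∑ i, η i * pt i x) ^ (1 / q) / Z η) :
    (∀ η ∈ S, ∀ η' ∈ S,
      (0 < 1 + lam * ⟪gradient ψ η', η - η'⟫ ∧
        1 + lam * ⟪gradient ψ η', η - η'⟫
          = (Z η ^ q / Z η' ^ q) * ∫ x, pη η x ^ q * pη η' x ^ (1 - q) ∂ν) ∧
      (ψ η - ψ η' - (1 / lam) * Real.log (1 + lam * ⟪gradient ψ η', η - η'⟫)
          = (1 / (q - 1)) * Real.log (∫ x, pη η x ^ q * pη η' x ^ (1 - q) ∂ν)) ∧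
      0 ≤ ψ η - ψ η' - (1 / lam) * Real.log (1 + lam * ⟪gradient ψ η', η - η'⟫)) ∧
    ConvexOn ℝ S (fun η => (1 / lam) * (Real.exp (lam * ψ η) - 1)) := by
  have hq0 : 0 < q := by rw [hq]; linarith
  have hq0' : q ≠ 0 := hq0.ne'
  have hqd : (1 : ℝ) / q ≠ 0 := one_div_ne_zero hq0'
  have hq1 : q ≠ 1 := fun h => hlam0 (by rw [hq] at h; linarith)
  have hlamq : lam = 1 - q := by rw [hq]; ring
  have h1q : (1 : ℝ) - q ≠ 0 := by rw [← hlamq]; exact hlam0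
  have hqd1 : (1 : ℝ) / q - 1 ≠ 0 := by
    intro h
    apply hq1
    have : (1 : ℝ) / q = 1 := by linarith
    field_simp at this
    linarith
  have hqd1' : (1 : ℝ) / q - 1 + 1 ≠ 0 := by
    rw [show (1 : ℝ) / q - 1 + 1 = 1 / q by ring]; exact hqd
  -- basic facts about p and pt
  have hpint : ∀ i, Integrable (p i) ν := by
    intro i; by_contra h
    simpa [integral_undef h] using hprob i
  have hptnn : ∀ i x, 0 ≤ pt i x := by
    intro i x; rw [hpt]
    exact div_nonneg (Real.rpow_nonneg (hpnn i x) q) (hpqpos i).le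
  have hptfun : ∀ i, pt i = fun x => p i x ^ q / ∫ z, p i z ^ q ∂ν := fun i => funext (hpt i)
  have hptm : ∀ i, AEMeasurable (pt i) ν := by
    intro i; rw [hptfun i]
    exact (hpq i).aemeasurable.div_const _
  have hmem : ∀ ζ ∈ S, (∀ i, 0 < ζ i) ∧ ∑ i, ζ i = 1 := by
    intro ζ hζ; rwa [hS] at hζ
  -- facts about u ζ x := ∑ i, ζ i * pt i x
  have hunn : ∀ ζ : EuclideanSpace ℝ (Fin (d + 1)), (∀ i, 0 ≤ ζ i) →
      ∀ x, 0 ≤ ∑ i, ζ i * pt i x := fun ζ hζ x =>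
    Finset.sum_nonneg fun i _ => mul_nonneg (hζ i) (hptnn i x)
  have hum : ∀ ζ : EuclideanSpace ℝ (Fin (d + 1)),
      AEMeasurable (fun x => ∑ i, ζ i * pt i x) ν := fun ζ =>
    Finset.aemeasurable_fun_sum _ fun i _ => (hptm i).const_mul _
  have hsingle : ∀ ζ : EuclideanSpace ℝ (Fin (d + 1)), (∀ i, 0 ≤ ζ i) →
      ∀ i x, ζ i * pt i x ≤ ∑ j, ζ j * pt j x := fun ζ hζ i x =>
    Finset.single_le_sum (fun j _ => mul_nonneg (hζ j) (hptnn j x)) (Finset.mem_univ i)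
  have hKle : ∀ a b : EuclideanSpace ℝ (Fin (d + 1)), (∀ i, 0 ≤ a i) → (∀ i, 0 < b i) →
      ∀ x, ∑ i, a i * pt i x ≤ (∑ i, a i / b i) * ∑ i, b i * pt i x := by
    intro a b ha hb x
    rw [Finset.sum_mul]
    refine Finset.sum_le_sum fun i _ => ?_
    have h1 : a i * pt i x = (a i / b i) * (b i * pt i x) := by
      field_simp [(hb i).ne']
    rw [h1]
    exact mul_le_mul_of_nonneg_left (hsingle b (fun j => (hb j).le) i x)
      (div_nonneg (ha i) (hb i).le)
  -- positivity of Z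
  have hZpos : ∀ b ∈ S, 0 < Z b := by
    intro b hb
    obtain ⟨hbpos, -⟩ := hmem b hb
    set c0 : ℝ := ∫ z, p 0 z ^ q ∂ν with hc0
    have h1 : ∀ x, (b 0 ^ (1 / q) / c0 ^ (1 / q)) * p 0 x = (b 0 * pt 0 x) ^ (1 / q) := by
      intro x
      rw [hpt, Real.mul_rpow (hbpos 0).le
          (div_nonneg (Real.rpow_nonneg (hpnn 0 x) q) (hpqpos 0).le),
        Real.div_rpow (Real.rpow_nonneg (hpnn 0 x) q) (hpqpos 0).le,
        ← Real.rpow_mul (hpnn 0 x), mul_one_div_cancel hq0', Real.rpow_one, ← hc0]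
      ring
    have hint0 : Integrable (fun x => (b 0 ^ (1 / q) / c0 ^ (1 / q)) * p 0 x) ν :=
      (hpint 0).const_mul _
    have hmono : ∫ x, (b 0 ^ (1 / q) / c0 ^ (1 / q)) * p 0 x ∂ν
        ≤ ∫ x, (∑ i, b i * pt i x) ^ (1 / q) ∂ν := by
      refine integral_mono hint0 (hZint b hb) fun x => ?_
      rw [h1 x]
      exact Real.rpow_le_rpow (mul_nonneg (hbpos 0).le (hptnn 0 x))
        (hsingle b (fun j => (hbpos j).le) 0 x) (by positivity)
    rw [integral_const_mul, hprob 0, mul_one] at hmono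
    have hcpos : 0 < b 0 ^ (1 / q) / c0 ^ (1 / q) :=
      div_pos (Real.rpow_pos_of_pos (hbpos 0) _) (Real.rpow_pos_of_pos (hpqpos 0) _)
    rw [hZ]
    exact lt_of_lt_of_le hcpos hmono
  -- integrability of the product u a * (u b)^(1/q-1)
  have hprod_int : ∀ a b : EuclideanSpace ℝ (Fin (d + 1)), (∀ i, 0 ≤ a i) → b ∈ S →
      Integrable (fun x => (∑ i, a i * pt i x) * (∑ i, b i * pt i x) ^ (1 / q - 1)) ν := by
    intro a b ha hb
    obtain ⟨hbpos, -⟩ := hmem b hb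
    refine Integrable.mono' ((hZint b hb).const_mul (∑ i, a i / b i))
      ((hum a).mul ((hum b).pow_const _)).aestronglyMeasurable (ae_of_all _ fun x => ?_)
    have hbnn := hunn b (fun j => (hbpos j).le) x
    have h1 : 0 ≤ (∑ i, a i * pt i x) * (∑ i, b i * pt i x) ^ (1 / q - 1) :=
      mul_nonneg (hunn a ha x) (Real.rpow_nonneg hbnn _)
    rw [Real.norm_eq_abs, abs_of_nonneg h1]
    have h2 := aux_mul_rpow (hunn a ha x) hbnn (hKle a b ha hbpos x) hqd1'
    simpa [show (1 : ℝ) / q - 1 + 1 = 1 / q by ring] using h2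
  -- integrability of (u b)^(1/q-1) * pt i
  have hpt_int : ∀ b ∈ S, ∀ i,
      Integrable (fun x => (∑ j, b j * pt j x) ^ (1 / q - 1) * pt i x) ν := by
    intro b hb i
    obtain ⟨hbpos, -⟩ := hmem b hb
    refine Integrable.mono' ((hZint b hb).const_mul (b i)⁻¹)
      (((hum b).pow_const _).mul (hptm i)).aestronglyMeasurable (ae_of_all _ fun x => ?_)
    have hbnn := hunn b (fun j => (hbpos j).le) x
    have h1 : 0 ≤ (∑ j, b j * pt j x) ^ (1 / q - 1) * pt i x :=
      mul_nonneg (Real.rpow_nonneg hbnn _) (hptnn i x)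
    rw [Real.norm_eq_abs, abs_of_nonneg h1]
    have hle : pt i x ≤ (b i)⁻¹ * ∑ j, b j * pt j x := by
      have := hsingle b (fun j => (hbpos j).le) i x
      rw [show pt i x = (b i)⁻¹ * (b i * pt i x) by
        rw [← mul_assoc, inv_mul_cancel₀ (hbpos i).ne', one_mul]]
      exact mul_le_mul_of_nonneg_left this (inv_nonneg.2 (hbpos i).le)
    have h2 := aux_mul_rpow (hptnn i x) hbnn hle hqd1'
    calc (∑ j, b j * pt j x) ^ (1 / q - 1) * pt i x
        = pt i x * (∑ j, b j * pt j x) ^ (1 / q - 1) := by ring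
      _ ≤ (b i)⁻¹ * (∑ j, b j * pt j x) ^ (1 / q - 1 + 1) := h2
      _ = (b i)⁻¹ * (∑ j, b j * pt j x) ^ (1 / q) := by
          rw [show (1 : ℝ) / q - 1 + 1 = 1 / q by ring]
  -- positivity of the cross integral
  have hIpos : ∀ a ∈ S, ∀ b ∈ S,
      0 < ∫ x, (∑ i, a i * pt i x) * (∑ i, b i * pt i x) ^ (1 / q - 1) ∂ν := by
    intro a ha b hb
    obtain ⟨hapos, -⟩ := hmem a ha
    obtain ⟨hbpos, -⟩ := hmem b hb
    set K : ℝ := ∑ i, b i / a i with hKdef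
    have hKpos : 0 < K :=
      Finset.sum_pos (fun i _ => div_pos (hbpos i) (hapos i)) Finset.univ_nonempty
    have hlow : ∀ x, K⁻¹ * (∑ i, b i * pt i x) ^ (1 / q)
        ≤ (∑ i, a i * pt i x) * (∑ i, b i * pt i x) ^ (1 / q - 1) := by
      intro x
      have hbnn := hunn b (fun j => (hbpos j).le) x
      have h2 : K⁻¹ * (∑ i, b i * pt i x) ≤ ∑ i, a i * pt i x := by
        have h3 := hKle b a (fun j => (hbpos j).le) hapos x
        calc K⁻¹ * (∑ i, b i * pt i x) ≤ K⁻¹ * (K * ∑ i, a i * pt i x) :=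
              mul_le_mul_of_nonneg_left h3 (inv_nonneg.2 hKpos.le)
          _ = ∑ i, a i * pt i x := by field_simp
      have h4 := aux_mul_rpow_ge hbnn h2 hqd1 hqd1'
      simpa [show (1 : ℝ) / q - 1 + 1 = 1 / q by ring] using h4
    have hmono := integral_mono ((hZint b hb).const_mul K⁻¹)
      (hprod_int a b (fun j => (hapos j).le) hb) hlow
    rw [integral_const_mul] at hmono
    have : 0 < K⁻¹ * ∫ x, (∑ i, b i * pt i x) ^ (1 / q) ∂ν := by
      rw [← hZ]
      exact mul_pos (inv_pos.2 hKpos) (hZpos b hb)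
    linarith
  -- linearity in the first argument
  have hlin : ∀ b ∈ S, ∀ a : EuclideanSpace ℝ (Fin (d + 1)),
      ∫ x, (∑ i, a i * pt i x) * (∑ i, b i * pt i x) ^ (1 / q - 1) ∂ν
        = ∑ i, a i * ∫ x, (∑ j, b j * pt j x) ^ (1 / q - 1) * pt i x ∂ν := by
    intro b hb a
    have h1 : ∀ x, (∑ i, a i * pt i x) * (∑ i, b i * pt i x) ^ (1 / q - 1)
        = ∑ i, a i * ((∑ j, b j * pt j x) ^ (1 / q - 1) * pt i x) := by
      intro x
      rw [Finset.sum_mul]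
      exact Finset.sum_congr rfl fun i _ => by ring
    simp_rw [h1]
    rw [integral_finset_sum _ fun i _ => (hpt_int b hb i).const_mul (a i)]
    exact Finset.sum_congr rfl fun i _ => integral_const_mul _ _
  -- self integral equals Z
  have hself : ∀ b ∈ S,
      ∫ x, (∑ i, b i * pt i x) * (∑ i, b i * pt i x) ^ (1 / q - 1) ∂ν = Z b := by
    intro b hb
    obtain ⟨hbpos, -⟩ := hmem b hb
    rw [hZ]
    have h1 : ∀ x, (∑ i, b i * pt i x) * (∑ i, b i * pt i x) ^ (1 / q - 1)
        = (∑ i, b i * pt i x) ^ (1 / q) := by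
      intro x
      rcases (hunn b (fun j => (hbpos j).le) x).eq_or_lt with h | h
      · rw [← h, Real.zero_rpow hqd, zero_mul]
      · have h2 := Real.rpow_add h 1 (1 / q - 1)
        rw [Real.rpow_one, show (1 : ℝ) + (1 / q - 1) = 1 / q by ring] at h2
        exact h2.symm
    simp_rw [h1]
  -- pη facts
  have hpηnn : ∀ b ∈ S, ∀ x, 0 ≤ pη b x := by
    intro b hb x
    obtain ⟨hbpos, -⟩ := hmem b hb
    rw [hpη]
    exact div_nonneg (Real.rpow_nonneg (hunn b (fun j => (hbpos j).le) x) _) (hZpos b hb).le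
  have hpηint : ∀ b ∈ S, Integrable (pη b) ν := by
    intro b hb
    have : pη b = fun x => (∑ i, b i * pt i x) ^ (1 / q) / Z b := funext (hpη b)
    rw [this]
    exact (hZint b hb).div_const _
  have hpηone : ∀ b ∈ S, ∫ x, pη b x ∂ν = 1 := by
    intro b hb
    simp_rw [hpη]
    rw [integral_div, ← hZ, div_self (hZpos b hb).ne']
  -- the main per-pair statement
  have master : ∀ η ∈ S, ∀ η' ∈ S,
      (0 < 1 + lam * ⟪gradient ψ η', η - η'⟫ ∧
        1 + lam * ⟪gradient ψ η', η - η'⟫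
          = (Z η ^ q / Z η' ^ q) * ∫ x, pη η x ^ q * pη η' x ^ (1 - q) ∂ν) ∧
      (ψ η - ψ η' - (1 / lam) * Real.log (1 + lam * ⟪gradient ψ η', η - η'⟫)
          = (1 / (q - 1)) * Real.log (∫ x, pη η x ^ q * pη η' x ^ (1 - q) ∂ν)) ∧
      0 ≤ ψ η - ψ η' - (1 / lam) * Real.log (1 + lam * ⟪gradient ψ η', η - η'⟫) := by
    intro η hη η' hη'
    obtain ⟨hηpos, hηsum⟩ := hmem η hη
    obtain ⟨hη'pos, hη'sum⟩ := hmem η' hη'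
    have hηnn : ∀ i, 0 ≤ η i := fun i => (hηpos i).le
    have hη'nn : ∀ i, 0 ≤ η' i := fun i => (hη'pos i).le
    set I : ℝ := ∫ x, (∑ i, η i * pt i x) * (∑ i, η' i * pt i x) ^ (1 / q - 1) ∂ν with hIdef
    have hI : 0 < I := hIpos η hη η' hη'
    have hZη := hZpos η hη
    have hZη' := hZpos η' hη'
    -- key1 : 1 + lam * inner = I / Z η'
    have hinner : ⟪gradient ψ η', η - η'⟫ = ∑ i, gradient ψ η' i * (η i - η' i) := by
      simp only [PiLp.inner_apply, PiLp.sub_apply, RCLike.inner_apply, conj_trivial, mul_comm]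
    have key1 : 1 + lam * ⟪gradient ψ η', η - η'⟫ = I / Z η' := by
      rw [hinner, Finset.mul_sum]
      have hterm : ∀ i, lam * (gradient ψ η' i * (η i - η' i))
          = (η i * ∫ x, (∑ j, η' j * pt j x) ^ (1 / q - 1) * pt i x ∂ν
            - η' i * ∫ x, (∑ j, η' j * pt j x) ^ (1 / q - 1) * pt i x ∂ν) / Z η' := by
        intro i
        rw [hDUI η' hη' i, hlamq]
        field_simp
      rw [Finset.sum_congr rfl fun i _ => hterm i, ← Finset.sum_div,
        Finset.sum_sub_distrib, ← hlin η' hη' η, ← hlin η' hη' η', hself η' hη', ← hIdef]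
      field_simp
      ring
    -- key2 : the Rényi integral
    have hpoint : ∀ x, pη η x ^ q * pη η' x ^ (1 - q)
        = ((∑ i, η i * pt i x) * (∑ i, η' i * pt i x) ^ (1 / q - 1))
          / (Z η ^ q * Z η' ^ (1 - q)) := by
      intro x
      rw [hpη, hpη,
        Real.div_rpow (Real.rpow_nonneg (hunn η hηnn x) _) hZη.le,
        Real.div_rpow (Real.rpow_nonneg (hunn η' hη'nn x) _) hZη'.le,
        ← Real.rpow_mul (hunn η hηnn x), ← Real.rpow_mul (hunn η' hη'nn x),
        one_div_mul_cancel hq0', Real.rpow_one,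
        show 1 / q * (1 - q) = 1 / q - 1 by rw [mul_sub, mul_one, one_div_mul_cancel hq0']]
      ring
    have key2 : ∫ x, pη η x ^ q * pη η' x ^ (1 - q) ∂ν
        = I / (Z η ^ q * Z η' ^ (1 - q)) := by
      simp_rw [hpoint]
      rw [integral_div, ← hIdef]
    have hZηq : (0:ℝ) < Z η ^ q := Real.rpow_pos_of_pos hZη _
    have hZη'q : (0:ℝ) < Z η' ^ q := Real.rpow_pos_of_pos hZη' _
    have hZη'1q : (0:ℝ) < Z η' ^ (1 - q) := Real.rpow_pos_of_pos hZη' _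
    have hZZ : Z η' ^ q * Z η' ^ (1 - q) = Z η' := by
      rw [← Real.rpow_add hZη', show q + (1 - q) = 1 by ring, Real.rpow_one]
    have key3 : (Z η ^ q / Z η' ^ q) * (I / (Z η ^ q * Z η' ^ (1 - q))) = I / Z η' := by
      have h9 : (Z η ^ q / Z η' ^ q) * (I / (Z η ^ q * Z η' ^ (1 - q)))
          = I / (Z η' ^ q * Z η' ^ (1 - q)) := by
        field_simp
      rw [h9, hZZ]
    have hJpos : 0 < ∫ x, pη η x ^ q * pη η' x ^ (1 - q) ∂ν := by
      rw [key2]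
      exact div_pos hI (mul_pos hZηq hZη'1q)
    have keypos : 0 < 1 + lam * ⟪gradient ψ η', η - η'⟫ := by
      rw [key1]
      exact div_pos hI hZη'
    have keyeq : 1 + lam * ⟪gradient ψ η', η - η'⟫
        = (Z η ^ q / Z η' ^ q) * ∫ x, pη η x ^ q * pη η' x ^ (1 - q) ∂ν := by
      rw [key1, key2, key3]
    -- the log identity
    have keylog : ψ η - ψ η' - (1 / lam) * Real.log (1 + lam * ⟪gradient ψ η', η - η'⟫)
        = (1 / (q - 1)) * Real.log (∫ x, pη η x ^ q * pη η' x ^ (1 - q) ∂ν) := by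
      rw [hψ η hηpos, hψ η' hη'pos, key1, key2,
        Real.log_div hI.ne' hZη'.ne',
        Real.log_div hI.ne' (mul_pos hZηq hZη'1q).ne',
        Real.log_mul hZηq.ne' hZη'1q.ne',
        Real.log_rpow hZη, Real.log_rpow hZη', hlamq]
      have hq1' : q - 1 ≠ 0 := sub_ne_zero.2 hq1
      field_simp
      ring
    -- nonnegativity
    have hJint : Integrable (fun x => pη η x ^ q * pη η' x ^ (1 - q)) ν := by
      have : (fun x => pη η x ^ q * pη η' x ^ (1 - q))
          = fun x => ((∑ i, η i * pt i x) * (∑ i, η' i * pt i x) ^ (1 / q - 1))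
            / (Z η ^ q * Z η' ^ (1 - q)) := funext hpoint
      rw [this]
      exact (hprod_int η η' hηnn hη').div_const _
    have keynn : 0 ≤ ψ η - ψ η' - (1 / lam) * Real.log (1 + lam * ⟪gradient ψ η', η - η'⟫) := by
      rw [keylog]
      rcases hlam0.lt_or_gt with hneg | hposl
      · -- lam < 0, q > 1 : J ≥ 1
        have hqge : 1 ≤ q := by rw [hq]; linarith
        have himp : ∀ x, pη η' x = 0 → pη η x = 0 := by
          intro x h
          have h1 : (∑ i, η' i * pt i x) ^ (1 / q) = 0 := by
            rw [hpη] at h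
            rcases div_eq_zero_iff.1 h with h2 | h2
            · exact h2
            · exact absurd h2 hZη'.ne'
          have h2 : (∑ i, η' i * pt i x) = 0 :=
            (Real.rpow_eq_zero (hunn η' hη'nn x) hqd).1 h1
          have h3 : (∑ i, η i * pt i x) = 0 := by
            have h4 := hKle η η' hηnn hη'pos x
            rw [h2, mul_zero] at h4
            exact le_antisymm h4 (hunn η hηnn x)
          rw [hpη, h3, Real.zero_rpow hqd, zero_div]
        have hge : ∀ x, q * pη η x + (1 - q) * pη η' x ≤ pη η x ^ q * pη η' x ^ (1 - q) :=
          fun x => aux_bernoulli (hpηnn η hη x) (hpηnn η' hη' x) hqge (himp x)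
        have hsum_int : Integrable (fun x => q * pη η x + (1 - q) * pη η' x) ν :=
          ((hpηint η hη).const_mul q).add ((hpηint η' hη').const_mul (1 - q))
        have h5 := integral_mono hsum_int hJint hge
        rw [integral_add ((hpηint η hη).const_mul q) ((hpηint η' hη').const_mul (1 - q)),
          integral_const_mul, integral_const_mul, hpηone η hη, hpηone η' hη'] at h5
        have h6 : (1:ℝ) ≤ ∫ x, pη η x ^ q * pη η' x ^ (1 - q) ∂ν := by linarith
        exact mul_nonneg (le_of_lt (one_div_pos.2 (by linarith))) (Real.log_nonneg h6)
      · -- 0 < lam, q < 1 : J ≤ 1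
        have hqlt : q < 1 := by rw [hq]; linarith
        have hle : ∀ x, pη η x ^ q * pη η' x ^ (1 - q) ≤ q * pη η x + (1 - q) * pη η' x :=
          fun x => Real.geom_mean_le_arith_mean2_weighted hq0.le (by linarith)
            (hpηnn η hη x) (hpηnn η' hη' x) (by ring)
        have hsum_int : Integrable (fun x => q * pη η x + (1 - q) * pη η' x) ν :=
          ((hpηint η hη).const_mul q).add ((hpηint η' hη').const_mul (1 - q))
        have h5 := integral_mono hJint hsum_int hle
        rw [integral_add ((hpηint η hη).const_mul q) ((hpηint η' hη').const_mul (1 - q)),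
          integral_const_mul, integral_const_mul, hpηone η hη, hpηone η' hη'] at h5
        have h6 : ∫ x, pη η x ^ q * pη η' x ^ (1 - q) ∂ν ≤ 1 := by linarith
        have h7 : (1:ℝ) / (q - 1) ≤ 0 := (one_div_neg.2 (by linarith)).le
        exact mul_nonneg_of_nonpos_of_nonpos h7 (Real.log_nonpos hJpos.le h6)
    exact ⟨⟨keypos, keyeq⟩, keylog, keynn⟩
  refine ⟨master, ?_⟩
  -- part (b) : convexity
  have subgrad : ∀ η ∈ S, ∀ η' ∈ S,
      (1 / lam) * (Real.exp (lam * ψ η') - 1)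
        + Real.exp (lam * ψ η') * ⟪gradient ψ η', η - η'⟫
        ≤ (1 / lam) * (Real.exp (lam * ψ η) - 1) := by
    intro η hη η' hη'
    obtain ⟨⟨hpos, -⟩, -, hD⟩ := master η hη η' hη'
    set T : ℝ := ⟪gradient ψ η', η - η'⟫ with hT
    have hrepr : (1 / lam) * (Real.exp (lam * ψ η) - 1)
        - ((1 / lam) * (Real.exp (lam * ψ η') - 1) + Real.exp (lam * ψ η') * T)
        = (Real.exp (lam * ψ η) - Real.exp (lam * ψ η') * (1 + lam * T)) / lam := by
      field_simp
      ring
    have hDlog : (1 / lam) * Real.log (1 + lam * T) ≤ ψ η - ψ η' := by linarith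
    rcases hlam0.lt_or_gt with hneg | hposl
    · have h1 : lam * (ψ η - ψ η') ≤ Real.log (1 + lam * T) := by
        have := mul_le_mul_of_nonpos_left hDlog hneg.le
        rw [← mul_assoc, mul_one_div, div_self hlam0, one_mul] at this
        linarith
      have h2 : Real.exp (lam * (ψ η - ψ η')) ≤ 1 + lam * T := by
        calc Real.exp (lam * (ψ η - ψ η')) ≤ Real.exp (Real.log (1 + lam * T)) :=
              Real.exp_le_exp.2 h1
          _ = 1 + lam * T := Real.exp_log hpos
      have h3 : Real.exp (lam * ψ η) ≤ Real.exp (lam * ψ η') * (1 + lam * T) := by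
        have h4 := mul_le_mul_of_nonneg_left h2 (Real.exp_pos (lam * ψ η')).le
        rw [← Real.exp_add, show lam * ψ η' + lam * (ψ η - ψ η') = lam * ψ η by ring] at h4
        exact h4
      have h5 : 0 ≤ (Real.exp (lam * ψ η) - Real.exp (lam * ψ η') * (1 + lam * T)) / lam := by
        rw [div_nonneg_iff]
        exact Or.inr ⟨by linarith, hneg.le⟩
      linarith [hrepr ▸ h5]
    · have h1 : Real.log (1 + lam * T) ≤ lam * (ψ η - ψ η') := by
        have := mul_le_mul_of_nonneg_left hDlog hposl.le
        rw [← mul_assoc, mul_one_div, div_self hlam0, one_mul] at this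
        linarith
      have h2 : 1 + lam * T ≤ Real.exp (lam * (ψ η - ψ η')) := by
        calc 1 + lam * T = Real.exp (Real.log (1 + lam * T)) := (Real.exp_log hpos).symm
          _ ≤ Real.exp (lam * (ψ η - ψ η')) := Real.exp_le_exp.2 h1
      have h3 : Real.exp (lam * ψ η') * (1 + lam * T) ≤ Real.exp (lam * ψ η) := by
        have h4 := mul_le_mul_of_nonneg_left h2 (Real.exp_pos (lam * ψ η')).le
        rw [← Real.exp_add, show lam * ψ η' + lam * (ψ η - ψ η') = lam * ψ η by ring] at h4
        exact h4
      have h5 : 0 ≤ (Real.exp (lam * ψ η) - Real.exp (lam * ψ η') * (1 + lam * T)) / lam :=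
        div_nonneg (by linarith) hposl.le
      linarith [hrepr ▸ h5]
  have hSconv : Convex ℝ S := by
    rw [hS]
    intro x hx y hy a b ha hb hab
    obtain ⟨hxp, hxs⟩ := hx
    obtain ⟨hyp, hys⟩ := hy
    constructor
    · intro i
      have hxi : (a • x + b • y) i = a * x i + b * y i := by
        simp [PiLp.add_apply, PiLp.smul_apply, smul_eq_mul]
      rw [hxi]
      rcases ha.eq_or_lt with h | h
      · have hb1 : b = 1 := by linarith
        rw [← h, hb1]
        simpa using hyp i
      · have := mul_pos h (hxp i)
        have := mul_nonneg hb (hyp i).le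
        linarith
    · have : ∀ i, (a • x + b • y) i = a * x i + b * y i := by
        intro i; simp [PiLp.add_apply, PiLp.smul_apply, smul_eq_mul]
      rw [Finset.sum_congr rfl fun i _ => this i, Finset.sum_add_distrib,
        ← Finset.mul_sum, ← Finset.mul_sum, hxs, hys]
      simpa using hab
  refine ⟨hSconv, ?_⟩
  intro x hx y hy a b ha hb hab
  set z := a • x + b • y with hzdef
  have hz : z ∈ S := hSconv hx hy ha hb hab
  have h1 := subgrad x hx z hz
  have h2 := subgrad y hy z hz
  set g := Real.exp (lam * ψ z) • gradient ψ z with hgdef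
  have hvec : a • (x - z) + b • (y - z) = 0 := by
    have : a • (x - z) + b • (y - z) = (a • x + b • y) - (a + b) • z := by
      rw [smul_sub, smul_sub, add_smul]; abel
    rw [this, hab, one_smul, ← hzdef, sub_self]
  have hinner0 : a * ⟪gradient ψ z, x - z⟫ + b * ⟪gradient ψ z, y - z⟫ = 0 := by
    have h3 : ⟪gradient ψ z, a • (x - z) + b • (y - z)⟫ = 0 := by
      rw [hvec, inner_zero_right]
    rw [inner_add_right, real_inner_smul_right, real_inner_smul_right] at h3
    exact h3
  have h4 := mul_le_mul_of_nonneg_left h1 ha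
  have h5 := mul_le_mul_of_nonneg_left h2 hb
  simp only [smul_eq_mul]
  have h6 : Real.exp (lam * ψ z) * (a * ⟪gradient ψ z, x - z⟫ + b * ⟪gradient ψ z, y - z⟫)
      = 0 := by rw [hinner0, mul_zero]
  have h7 : a * ((1 / lam) * (Real.exp (lam * ψ z) - 1))
      + b * ((1 / lam) * (Real.exp (lam * ψ z) - 1))
      = (1 / lam) * (Real.exp (lam * ψ z) - 1) := by rw [← add_mul, hab, one_mul]
  nlinarith [h4, h5, h6, h7]
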